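/- ∫_0^∞ K_0(x)² dx = π²/4, where K_0 is the modified Bessel function of the second kind of order zero. -/

import Mathlib

/-- Modified Bessel function of the second kind, via the integral representation
`K_ν(x) = ∫_0^∞ exp(-x cosh t) cosh(ν t) dt` (valid for `x > 0`). -/
noncomputable def besselK (ν x : ℝ) : ℝ :=
  ∫ t in Set.Ioi (0 : ℝ), Real.exp (-x * Real.cosh t) * Real.cosh (ν * t)

open MeasureTheory Set Real Filter ENNReal

-- innermost exp integral
lemma lint_exp {a : ℝ} (ha : 0 < a) :
    ∫⁻ x in Set.Ioi (0:ℝ), ENNReal.ofReal (Real.exp (-(a * x))) = ENNReal.ofReal a⁻¹ := by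
  have hint : IntegrableOn (fun x => Real.exp (-(a * x))) (Set.Ioi (0:ℝ)) := by
    simpa [neg_mul] using exp_neg_integrableOn_Ioi 0 ha
  rw [← ofReal_integral_eq_lintegral_ofReal hint (Filter.Eventually.of_forall fun x => (Real.exp_pos _).le)]
  congr 1
  have hg : ∀ x ∈ Set.Ici (0:ℝ), HasDerivAt (fun x => -(a⁻¹ * Real.exp (-(a * x)))) (Real.exp (-(a * x))) x := by
    intro x _
    have : HasDerivAt (fun x => -(a * x)) (-a) x := by
      simpa [Pi.neg_def] using ((hasDerivAt_id x).const_mul a).neg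
    have h2 := (Real.hasDerivAt_exp (-(a * x))).comp x this
    have h3 := (h2.const_mul a⁻¹).neg
    refine h3.congr_deriv ?_
    field_simp
  have htop : Tendsto (fun x => -(a⁻¹ * Real.exp (-(a * x)))) atTop (nhds 0) := by
    have : Tendsto (fun x : ℝ => Real.exp (-(a * x))) atTop (nhds 0) := by
      have := Real.tendsto_exp_neg_atTop_nhds_zero.comp ((Tendsto.const_mul_atTop ha tendsto_id))
      simpa [Function.comp_def] using this
    simpa using (this.const_mul a⁻¹).neg
  have := integral_Ioi_of_hasDerivAt_of_nonneg' hg (fun x _ => (Real.exp_pos _).le) htop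
  rw [this]; simp

lemma cosh_int {s : ℝ} (hs : 0 < s) :
    IntegrableOn (fun t => (Real.cosh s + Real.cosh t)⁻¹) (Set.Ioi (0:ℝ)) ∧
    ∫ t in Set.Ioi (0:ℝ), (Real.cosh s + Real.cosh t)⁻¹ = s / Real.sinh s := by
  have hsinh : 0 < Real.sinh s := Real.sinh_pos_iff.mpr hs
  set g : ℝ → ℝ := fun t =>
    (Real.log (Real.exp t + Real.exp (-s)) - Real.log (Real.exp t + Real.exp s)) / Real.sinh s
    with hg_def
  have hpos1 : ∀ t : ℝ, 0 < Real.exp t + Real.exp (-s) := fun t => by positivity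
  have hpos2 : ∀ t : ℝ, 0 < Real.exp t + Real.exp s := fun t => by positivity
  have hderiv : ∀ t ∈ Set.Ici (0:ℝ), HasDerivAt g ((Real.cosh s + Real.cosh t)⁻¹) t := by
    intro t _
    have h1 : HasDerivAt (fun t => Real.log (Real.exp t + Real.exp (-s)))
        (Real.exp t / (Real.exp t + Real.exp (-s))) t := by
      have := ((Real.hasDerivAt_exp t).add_const (Real.exp (-s))).log (hpos1 t).ne'
      simpa using this
    have h2 : HasDerivAt (fun t => Real.log (Real.exp t + Real.exp s))
        (Real.exp t / (Real.exp t + Real.exp s)) t := by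
      have := ((Real.hasDerivAt_exp t).add_const (Real.exp s)).log (hpos2 t).ne'
      simpa using this
    have h3 := (h1.sub h2).div_const (Real.sinh s)
    refine h3.congr_deriv ?_
    have key : Real.exp t / (Real.exp t + Real.exp (-s)) - Real.exp t / (Real.exp t + Real.exp s)
        = Real.sinh s / (Real.cosh s + Real.cosh t) := by
      rw [div_sub_div _ _ (hpos1 t).ne' (hpos2 t).ne']
      rw [Real.sinh_eq, Real.cosh_eq, Real.cosh_eq, Real.exp_neg s, Real.exp_neg t]
      rw [div_eq_div_iff (by positivity) (by positivity)]
      field_simp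
      ring
    rw [key, div_right_comm, div_self hsinh.ne', one_div]
  have htop : Tendsto g atTop (nhds 0) := by
    have hc : ∀ c : ℝ, Tendsto (fun t => Real.log (1 + c * Real.exp (-t))) atTop (nhds 0) := by
      intro c
      have h1 : Tendsto (fun t : ℝ => 1 + c * Real.exp (-t)) atTop (nhds 1) := by
        simpa using ((tendsto_exp_neg_atTop_nhds_zero.const_mul c).const_add 1)
      have := (Real.continuousAt_log one_ne_zero).tendsto.comp h1
      simpa [Function.comp_def] using this
    have hkey : ∀ t : ℝ, g t = (Real.log (1 + Real.exp (-s) * Real.exp (-t))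
        - Real.log (1 + Real.exp s * Real.exp (-t))) / Real.sinh s := by
      intro t
      have q : ∀ c : ℝ, 0 < c → Real.log (Real.exp t + c)
          = t + Real.log (1 + c * Real.exp (-t)) := by
        intro c hc
        have he : Real.exp t + c = Real.exp t * (1 + c * Real.exp (-t)) := by
          rw [mul_add, mul_one, mul_comm c, ← mul_assoc, ← Real.exp_add]
          simp
        rw [he, Real.log_mul (Real.exp_ne_zero t) (by positivity), Real.log_exp]
      rw [hg_def]; simp only
      rw [q _ (Real.exp_pos (-s)), q _ (Real.exp_pos s)]
      ring
    have h2 := (((hc (Real.exp (-s))).sub (hc (Real.exp s))).div_const (Real.sinh s))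
    rw [show (0:ℝ) - 0 = 0 by ring] at h2
    rw [show ((0:ℝ)/Real.sinh s) = 0 by simp] at h2
    exact Tendsto.congr (fun t => (hkey t).symm) h2
  have hnn : ∀ t ∈ Set.Ioi (0:ℝ), 0 ≤ (Real.cosh s + Real.cosh t)⁻¹ := by
    intro t _
    have h : 0 < Real.cosh s + Real.cosh t := by positivity
    positivity
  have hg0 : g 0 = -(s / Real.sinh s) := by
    rw [hg_def]; simp only [Real.exp_zero]
    have h2 : Real.log (1 + Real.exp (-s)) - Real.log (1 + Real.exp s) = -s := by
      have h1 : (1 : ℝ) + Real.exp (-s) = Real.exp (-s) * (1 + Real.exp s) := by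
        rw [mul_add, mul_one, ← Real.exp_add]; simp [add_comm]
      rw [h1, Real.log_mul (Real.exp_ne_zero _) (by positivity), Real.log_exp]
      ring
    rw [h2]; ring
  refine ⟨integrableOn_Ioi_deriv_of_nonneg' hderiv hnn htop, ?_⟩
  rw [integral_Ioi_of_hasDerivAt_of_nonneg' hderiv hnn htop, hg0]
  ring

lemma exp_lin_int {b : ℝ} (hb : 0 < b) :
    IntegrableOn (fun x => x * Real.exp (-(b * x))) (Set.Ioi (0:ℝ)) ∧
    ∫ x in Set.Ioi (0:ℝ), x * Real.exp (-(b * x)) = (b^2)⁻¹ := by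
  set g : ℝ → ℝ := fun x => -((x * b⁻¹ + (b^2)⁻¹) * Real.exp (-(b*x))) with hg
  have hderiv : ∀ x ∈ Set.Ici (0:ℝ), HasDerivAt g (x * Real.exp (-(b*x))) x := by
    intro x _
    have h1 : HasDerivAt (fun x : ℝ => x * b⁻¹ + (b^2)⁻¹) b⁻¹ x := by
      simpa using ((hasDerivAt_id x).mul_const b⁻¹).add_const ((b^2)⁻¹)
    have h2 : HasDerivAt (fun x : ℝ => Real.exp (-(b*x))) (-b * Real.exp (-(b*x))) x := by
      have hb2 : HasDerivAt (fun x : ℝ => -(b*x)) (-b) x := by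
        simpa [Pi.neg_def] using ((hasDerivAt_id x).const_mul b).neg
      simpa [mul_comm, Function.comp_def] using (Real.hasDerivAt_exp (-(b*x))).comp x hb2
    have h3 := (h1.mul h2).neg
    refine h3.congr_deriv ?_
    field_simp
    ring
  have hnn : ∀ x ∈ Set.Ioi (0:ℝ), 0 ≤ x * Real.exp (-(b*x)) := by
    intro x hx
    exact mul_nonneg (le_of_lt hx) (Real.exp_pos _).le
  have htop : Tendsto g atTop (nhds 0) := by
    have hbx : Tendsto (fun x : ℝ => b * x) atTop atTop :=
      Tendsto.const_mul_atTop hb tendsto_id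
    have h1 : Tendsto (fun x : ℝ => (b*x) * Real.exp (-(b*x))) atTop (nhds 0) := by
      have := (Real.tendsto_pow_mul_exp_neg_atTop_nhds_zero 1).comp hbx
      simpa [Function.comp_def] using this
    have h2 : Tendsto (fun x : ℝ => Real.exp (-(b*x))) atTop (nhds 0) := by
      have := Real.tendsto_exp_neg_atTop_nhds_zero.comp hbx
      simpa [Function.comp_def] using this
    have h3 : Tendsto (fun x : ℝ => b⁻¹ * ((b*x) * Real.exp (-(b*x))) * b⁻¹
        + (b^2)⁻¹ * Real.exp (-(b*x))) atTop (nhds 0) := by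
      have := (((h1.const_mul b⁻¹).mul_const b⁻¹).add (h2.const_mul ((b^2)⁻¹)))
      simpa using this
    have heq : ∀ x : ℝ, g x = -(b⁻¹ * ((b*x) * Real.exp (-(b*x))) * b⁻¹
        + (b^2)⁻¹ * Real.exp (-(b*x))) := by
      intro x
      rw [hg]
      field_simp
    rw [show (0:ℝ) = -0 by ring]
    exact Tendsto.congr (fun x => (heq x).symm) h3.neg
  refine ⟨integrableOn_Ioi_deriv_of_nonneg' hderiv hnn htop, ?_⟩
  rw [integral_Ioi_of_hasDerivAt_of_nonneg' hderiv hnn htop]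
  rw [hg]
  simp

lemma sinh_series {s : ℝ} (hs : 0 < s) :
    ENNReal.ofReal (s / Real.sinh s)
      = ∑' n : ℕ, ENNReal.ofReal (2 * s * Real.exp (-((2*(n:ℝ)+1) * s))) := by
  have hr0 : (0:ℝ) ≤ Real.exp (-(2*s)) := (Real.exp_pos _).le
  have hr1 : Real.exp (-(2*s)) < 1 := by
    rw [Real.exp_lt_one_iff]; linarith
  have hterm : ∀ n : ℕ, 2 * s * Real.exp (-((2*(n:ℝ)+1) * s))
      = (2 * s * Real.exp (-s)) * (Real.exp (-(2*s)))^n := by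
    intro n
    rw [show -((2*(n:ℝ)+1)*s) = -s + (n:ℝ)*(-(2*s)) by ring, Real.exp_add, Real.exp_nat_mul]
    ring
  have hsum : Summable (fun n : ℕ => 2 * s * Real.exp (-((2*(n:ℝ)+1) * s))) := by
    apply Summable.congr (((summable_geometric_of_lt_one hr0 hr1).mul_left
      (2 * s * Real.exp (-s))))
    intro n
    exact (hterm n).symm
  rw [← ENNReal.ofReal_tsum_of_nonneg (fun n => by positivity) hsum]
  congr 1
  have := tsum_geometric_of_lt_one hr0 hr1
  calc s / Real.sinh s = (2 * s * Real.exp (-s)) * (1 - Real.exp (-(2*s)))⁻¹ := by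
        have h1 : (1:ℝ) - Real.exp (-(2*s)) = Real.exp (-s) * (2 * Real.sinh s) := by
          rw [Real.sinh_eq, Real.exp_neg s, Real.exp_neg (2*s)]
          have : Real.exp (2*s) = Real.exp s * Real.exp s := by
            rw [← Real.exp_add]; congr 1; ring
          rw [this]
          field_simp
        rw [h1, mul_inv]
        have hsinh : Real.sinh s ≠ 0 := (Real.sinh_pos_iff.mpr hs).ne'
        have hexp : Real.exp (-s) ≠ 0 := Real.exp_ne_zero _
        field_simp
    _ = ∑' n : ℕ, 2 * s * Real.exp (-((2*(n:ℝ)+1) * s)) := by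
        rw [tsum_congr hterm, tsum_mul_left, this]

lemma odd_sq_sum : ∑' n : ℕ, (2:ℝ) / (2*(n:ℝ)+1)^2 = Real.pi^2/4 := by
  have hbasel := hasSum_zeta_two
  set f : ℕ → ℝ := fun n => 1 / (n:ℝ)^2 with hf
  have hsf : Summable f := hbasel.summable
  have heven : (fun k : ℕ => f (2*k)) = fun k : ℕ => (1/4) * f k := by
    funext k
    rw [hf]
    push_cast
    rw [mul_pow, div_mul_div_comm]
    norm_num
  have hoe : Summable (fun k : ℕ => f (2*k)) := by
    rw [heven]; exact hsf.mul_left _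
  have hodd : Summable (fun k : ℕ => f (2*k+1)) :=
    hsf.comp_injective (fun a b h => by omega)
  have hsplit := tsum_even_add_odd hoe hodd
  have htot : ∑' n, f n = Real.pi^2/6 := hbasel.tsum_eq
  have hev : ∑' k, f (2*k) = Real.pi^2/24 := by
    rw [heven, tsum_mul_left, htot]; ring
  have hod : ∑' k, f (2*k+1) = Real.pi^2/8 := by
    have := hsplit
    rw [htot, hev] at this
    linarith
  have hfin : ∀ n : ℕ, (2:ℝ) / (2*(n:ℝ)+1)^2 = 2 * f (2*n+1) := by
    intro n
    rw [hf]
    push_cast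
    ring
  rw [tsum_congr hfin, tsum_mul_left, hod]
  ring

lemma lint_cosh {s : ℝ} (hs : 0 < s) :
    ∫⁻ t in Set.Ioi (0:ℝ), ENNReal.ofReal ((Real.cosh s + Real.cosh t)⁻¹)
      = ENNReal.ofReal (s / Real.sinh s) := by
  rw [← ofReal_integral_eq_lintegral_ofReal (cosh_int hs).1
    (Filter.Eventually.of_forall fun t => by positivity)]
  rw [(cosh_int hs).2]

lemma odd_sq_summable : Summable (fun n : ℕ => (2:ℝ) / (2*(n:ℝ)+1)^2) := by
  have hsf : Summable (fun n : ℕ => 1 / ((n:ℝ))^2) := hasSum_zeta_two.summable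
  have hodd : Summable (fun k : ℕ => 1 / (((2*k+1 : ℕ)):ℝ)^2) :=
    hsf.comp_injective (fun a b h => by omega)
  apply Summable.congr (hodd.mul_left 2)
  intro n
  push_cast
  ring

lemma lint_sinh :
    ∫⁻ s in Set.Ioi (0:ℝ), ENNReal.ofReal (s / Real.sinh s)
      = ENNReal.ofReal (Real.pi^2/4) := by
  have h1 : ∫⁻ s in Set.Ioi (0:ℝ), ENNReal.ofReal (s / Real.sinh s)
      = ∫⁻ s in Set.Ioi (0:ℝ), ∑' n : ℕ,
          ENNReal.ofReal (2 * s * Real.exp (-((2*(n:ℝ)+1) * s))) := by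
    apply setLIntegral_congr_fun measurableSet_Ioi
    exact fun s hs => sinh_series hs
  rw [h1, lintegral_tsum (fun n => by
    apply Measurable.aemeasurable
    apply Measurable.ennreal_ofReal
    fun_prop)]
  have h2 : ∀ n : ℕ, ∫⁻ s in Set.Ioi (0:ℝ),
      ENNReal.ofReal (2 * s * Real.exp (-((2*(n:ℝ)+1) * s)))
      = ENNReal.ofReal (2 / (2*(n:ℝ)+1)^2) := by
    intro n
    have hb : (0:ℝ) < 2*(n:ℝ)+1 := by positivity
    have hint := exp_lin_int hb
    have hint2 : IntegrableOn (fun s => 2 * s * Real.exp (-((2*(n:ℝ)+1) * s)))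
        (Set.Ioi (0:ℝ)) := by
      exact (hint.1.const_mul 2).congr (Filter.Eventually.of_forall fun s => by ring)
    rw [← ofReal_integral_eq_lintegral_ofReal hint2
      ((ae_restrict_iff' measurableSet_Ioi).mpr (Filter.Eventually.of_forall
        fun s hs => by have : (0:ℝ) < s := hs; positivity))]
    congr 1
    have : ∫ s in Set.Ioi (0:ℝ), 2 * s * Real.exp (-((2*(n:ℝ)+1) * s))
        = 2 * ∫ s in Set.Ioi (0:ℝ), s * Real.exp (-((2*(n:ℝ)+1) * s)) := by
      rw [← integral_const_mul]
      congr 1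
      funext s
      ring
    rw [this, hint.2]
    rw [div_eq_mul_inv]
  rw [tsum_congr h2, ← ENNReal.ofReal_tsum_of_nonneg (fun n => by positivity) odd_sq_summable,
    odd_sq_sum]

lemma besselK_zero_eq (x : ℝ) :
    besselK 0 x = ∫ t in Set.Ioi (0:ℝ), Real.exp (-x * Real.cosh t) := by
  unfold besselK
  simp

lemma besselK_integrableOn {x : ℝ} (hx : 0 < x) :
    IntegrableOn (fun t => Real.exp (-x * Real.cosh t)) (Set.Ioi (0:ℝ)) := by
  apply (exp_neg_integrableOn_Ioi 0 hx).mono'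
  · exact (Continuous.aestronglyMeasurable (by fun_prop))
  · rw [ae_restrict_iff' measurableSet_Ioi]
    apply Filter.Eventually.of_forall
    intro t ht
    have ht' : (0:ℝ) < t := ht
    have h1 : t ≤ Real.cosh t :=
      le_trans (Real.self_le_sinh_iff.mpr ht'.le) (Real.sinh_lt_cosh t).le
    rw [Real.norm_eq_abs, Real.abs_exp]
    apply Real.exp_le_exp.mpr
    nlinarith

theorem integral_besselK0_square :
    ∫ x in Set.Ioi (0 : ℝ), besselK 0 x ^ 2 = Real.pi ^ 2 / 4 := by
  have hKnn : ∀ x : ℝ, 0 ≤ besselK 0 x := fun x => by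
    rw [besselK_zero_eq]
    exact setIntegral_nonneg measurableSet_Ioi fun t _ => (Real.exp_pos _).le
  have hconte : Continuous fun p : ℝ × ℝ => Real.exp (-p.1 * Real.cosh p.2) := by fun_prop
  have h0 : StronglyMeasurable (fun x : ℝ => ∫ t in Set.Ioi (0:ℝ),
      Real.exp (-x * Real.cosh t)) :=
    (hconte.stronglyMeasurable).integral_prod_right'
  have hsm : AEStronglyMeasurable (fun x => besselK 0 x ^ 2)
      (volume.restrict (Set.Ioi (0:ℝ))) := by
    have h1 : (fun x => besselK 0 x ^ 2)
        = fun x => (∫ t in Set.Ioi (0:ℝ), Real.exp (-x * Real.cosh t))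
            * (∫ t in Set.Ioi (0:ℝ), Real.exp (-x * Real.cosh t)) := by
      funext x; rw [besselK_zero_eq]; ring
    rw [h1]
    exact (h0.mul h0).aestronglyMeasurable
  have hmeas_x : ∀ x : ℝ, Measurable fun t =>
      ENNReal.ofReal (Real.exp (-x * Real.cosh t)) := fun x =>
    (Continuous.measurable (by fun_prop)).ennreal_ofReal
  have key : ∫⁻ x in Set.Ioi (0:ℝ), ENNReal.ofReal (besselK 0 x ^ 2)
      = ENNReal.ofReal (Real.pi^2/4) := by
    have stepA : ∫⁻ x in Set.Ioi (0:ℝ), ENNReal.ofReal (besselK 0 x ^ 2)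
        = ∫⁻ x in Set.Ioi (0:ℝ), ∫⁻ s in Set.Ioi (0:ℝ), ∫⁻ t in Set.Ioi (0:ℝ),
            ENNReal.ofReal (Real.exp (-((Real.cosh s + Real.cosh t) * x))) := by
      apply setLIntegral_congr_fun measurableSet_Ioi
      intro x hx
      have hx' : (0:ℝ) < x := hx
      have hKx : ENNReal.ofReal (besselK 0 x) = ∫⁻ t in Set.Ioi (0:ℝ),
          ENNReal.ofReal (Real.exp (-x * Real.cosh t)) := by
        rw [besselK_zero_eq]
        exact ofReal_integral_eq_lintegral_ofReal (besselK_integrableOn hx')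
          (Filter.Eventually.of_forall fun t => (Real.exp_pos _).le)
      calc ENNReal.ofReal (besselK 0 x ^ 2)
          = (∫⁻ s in Set.Ioi (0:ℝ), ENNReal.ofReal (Real.exp (-x * Real.cosh s)))
            * (∫⁻ t in Set.Ioi (0:ℝ), ENNReal.ofReal (Real.exp (-x * Real.cosh t))) := by
            rw [sq, ENNReal.ofReal_mul (hKnn x), hKx]
        _ = ∫⁻ s in Set.Ioi (0:ℝ), ∫⁻ t in Set.Ioi (0:ℝ),
              ENNReal.ofReal (Real.exp (-((Real.cosh s + Real.cosh t) * x))) := by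
            rw [← lintegral_mul_const _ (hmeas_x x)]
            apply lintegral_congr
            intro s
            rw [← lintegral_const_mul _ (hmeas_x x)]
            apply lintegral_congr
            intro t
            rw [← ENNReal.ofReal_mul (Real.exp_pos _).le, ← Real.exp_add]
            congr 2
            ring
    have hf1 : AEMeasurable (fun p : ℝ × ℝ => ∫⁻ t in Set.Ioi (0:ℝ),
        ENNReal.ofReal (Real.exp (-((Real.cosh p.2 + Real.cosh t) * p.1))))
        ((volume.restrict (Set.Ioi (0:ℝ))).prod (volume.restrict (Set.Ioi (0:ℝ)))) := by
      apply Measurable.aemeasurable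
      apply Measurable.lintegral_prod_right'
        (f := fun q : (ℝ × ℝ) × ℝ =>
          ENNReal.ofReal (Real.exp (-((Real.cosh q.1.2 + Real.cosh q.2) * q.1.1))))
      exact (Continuous.measurable (by fun_prop)).ennreal_ofReal
    have hf2 : ∀ s : ℝ, AEMeasurable (fun p : ℝ × ℝ =>
        ENNReal.ofReal (Real.exp (-((Real.cosh s + Real.cosh p.2) * p.1))))
        ((volume.restrict (Set.Ioi (0:ℝ))).prod (volume.restrict (Set.Ioi (0:ℝ)))) := by
      intro s
      exact (Measurable.aemeasurable ((Continuous.measurable (by fun_prop)).ennreal_ofReal))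
    calc ∫⁻ x in Set.Ioi (0:ℝ), ENNReal.ofReal (besselK 0 x ^ 2)
        = ∫⁻ x in Set.Ioi (0:ℝ), ∫⁻ s in Set.Ioi (0:ℝ), ∫⁻ t in Set.Ioi (0:ℝ),
            ENNReal.ofReal (Real.exp (-((Real.cosh s + Real.cosh t) * x))) := stepA
      _ = ∫⁻ s in Set.Ioi (0:ℝ), ∫⁻ x in Set.Ioi (0:ℝ), ∫⁻ t in Set.Ioi (0:ℝ),
            ENNReal.ofReal (Real.exp (-((Real.cosh s + Real.cosh t) * x))) :=
          lintegral_lintegral_swap hf1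
      _ = ∫⁻ s in Set.Ioi (0:ℝ), ∫⁻ t in Set.Ioi (0:ℝ), ∫⁻ x in Set.Ioi (0:ℝ),
            ENNReal.ofReal (Real.exp (-((Real.cosh s + Real.cosh t) * x))) := by
          apply lintegral_congr
          intro s
          exact lintegral_lintegral_swap (hf2 s)
      _ = ∫⁻ s in Set.Ioi (0:ℝ), ∫⁻ t in Set.Ioi (0:ℝ),
            ENNReal.ofReal ((Real.cosh s + Real.cosh t)⁻¹) := by
          apply lintegral_congr
          intro s
          apply lintegral_congr
          intro t
          have hC : (0:ℝ) < Real.cosh s + Real.cosh t := by positivity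
          exact lint_exp hC
      _ = ∫⁻ s in Set.Ioi (0:ℝ), ENNReal.ofReal (s / Real.sinh s) := by
          apply setLIntegral_congr_fun measurableSet_Ioi
          exact fun s hs => lint_cosh hs
      _ = ENNReal.ofReal (Real.pi^2/4) := lint_sinh
  rw [integral_eq_lintegral_of_nonneg_ae
    (Filter.Eventually.of_forall fun x => sq_nonneg _) hsm, key,
    ENNReal.toReal_ofReal (by positivity)]
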